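/- For every l, c ∈ ℕ with c ≥ 1, every finite set of templates 𝒯, and every fixed finite label alphabet {0,1}^d, the relation of l-c-𝒯-bisimilarity on pointed labelled directed graphs with node labels in {0,1}^d has finite index, i.e., it has only finitely many equivalence classes. -/

import Mathlib

set_option maxHeartbeats 1000000

attribute [local instance 10] Classical.propDecidable

/-- A template `T = (V, E⁺, E⁻, r)`: vertex set `Fin (n+1)` (cardinality `n+1`),
root `0`, edges `pos`, non-edges `neg`, with `pos ∩ neg = ∅`. -/
structure Template where
  n : ℕ
  pos : Finset (Fin (n + 1) × Fin (n + 1))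
  neg : Finset (Fin (n + 1) × Fin (n + 1))
  disj : ∀ p, ¬(p ∈ pos ∧ p ∈ neg)

/-- A labelled directed graph with labels in `Λ`: a finite vertex set (a finite
subset of `ℕ`), an edge relation `E ⊆ V × V`, and a labelling of the nodes. -/
structure LGraph (Λ : Type) where
  verts : Finset ℕ
  edge : ℕ → ℕ → Prop
  lab : ℕ → Λ
  edge_mem : ∀ u w, edge u w → u ∈ verts ∧ w ∈ verts

/-- `f` is a template embedding of `T` into the pointed graph `(G, w)`:
an injective map sending the root to `w`, `E⁺`-pairs to edges and `E⁻`-pairs to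
non-edges. -/
def IsEmb {Λ : Type} (T : Template) (G : LGraph Λ) (w : ℕ) (f : Fin (T.n + 1) → ℕ) : Prop :=
  Function.Injective f ∧ f 0 = w ∧ (∀ i, f i ∈ G.verts) ∧
    (∀ p ∈ T.pos, G.edge (f p.1) (f p.2)) ∧ (∀ p ∈ T.neg, ¬ G.edge (f p.1) (f p.2))

/-- The (finite) set `emb(T,(G,w))` of template embeddings of `T` into `(G, w)`. -/
noncomputable def embFinset {Λ : Type} (T : Template) (G : LGraph Λ) (w : ℕ) :
    Finset (Fin (T.n + 1) → ℕ) :=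
  (Fintype.piFinset fun _ : Fin (T.n + 1) => G.verts).filter (IsEmb T G w)

/-- Forth condition: any `k` pairwise distinct template embeddings of `T` at `(G,v)`
can be matched by `k` pairwise distinct embeddings at `(G',v')`, pointwise related
by `Z`. -/
def Forth {Λ : Type} (Z : ℕ → ℕ → Prop) (T : Template) (G G' : LGraph Λ)
    (v v' : ℕ) (k : ℕ) : Prop :=
  ∀ F : Fin k → (Fin (T.n + 1) → ℕ), Function.Injective F → (∀ i, IsEmb T G v (F i)) →
    ∃ F' : Fin k → (Fin (T.n + 1) → ℕ), Function.Injective F' ∧ (∀ i, IsEmb T G' v' (F' i)) ∧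
      ∀ i u, Z (F i u) (F' i u)

/-- `Z` is a graded `l`-`𝒯`-bisimulation between `G` and `G'`, where the allowed
multiplicities `k` in the back-and-forth conditions are those satisfying `P`. -/
def IsBisimP {Λ : Type} (𝒯 : Finset Template) (P : ℕ → Prop) (G G' : LGraph Λ) :
    ℕ → (ℕ → ℕ → Prop) → Prop
  | 0, Z => ∀ v v', Z v v' → G.lab v = G'.lab v'
  | l + 1, Z => ∃ Z', IsBisimP 𝒯 P G G' l Z' ∧
      ∀ v v', Z v v' → Z' v v' ∧ ∀ T ∈ 𝒯, ∀ k, P k →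
        Forth Z' T G G' v v' k ∧ Forth (fun a b => Z' b a) T G' G v' v k

/-- `(G,v)` and `(G',v')` are graded `l`-`𝒯`-bisimilar. -/
def GBisimilar {Λ : Type} (𝒯 : Finset Template) (l : ℕ) (G : LGraph Λ) (v : ℕ)
    (G' : LGraph Λ) (v' : ℕ) : Prop :=
  ∃ Z, IsBisimP 𝒯 (fun k => 1 ≤ k) G G' l Z ∧ Z v v'

/-- `(G,v)` and `(G',v')` are `l`-`c`-`𝒯`-bisimilar (multiplicities restricted to `k ≤ c`). -/
def BBisimilar {Λ : Type} (𝒯 : Finset Template) (l c : ℕ) (G : LGraph Λ) (v : ℕ)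
    (G' : LGraph Λ) (v' : ℕ) : Prop :=
  ∃ Z, IsBisimP 𝒯 (fun k => 1 ≤ k ∧ k ≤ c) G G' l Z ∧ Z v v'

/-- `A↾c`: cap all multiplicities of a multiset at `c`. -/
noncomputable def mcap {α : Type} (c : ℕ) (m : Multiset α) : Multiset α :=
  m.toFinset.val.bind fun a => Multiset.replicate (min c (m.count a)) a

/-- The `𝒯`-WL colouring of `G` after `l` rounds, using `hash0` for the initial
colouring and `hash` for the refinement rounds; at each round the new colour of `v`
hashes its previous colour together with, for each template `T ∈ 𝒯`, the multiset of
`T`-labelled colourings induced by the template embeddings at `v`. -/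
noncomputable def colWL {Λ C : Type} (𝒯 : Finset Template) (hash0 : Λ → C)
    (hash : C → ((T : {x // x ∈ 𝒯}) → Multiset (Fin (T.1.n + 1) → C)) → C)
    (G : LGraph Λ) : ℕ → ℕ → C
  | 0, v => hash0 (G.lab v)
  | l + 1, v =>
      hash (colWL 𝒯 hash0 hash G l v)
        (fun T => (embFinset T.1 G v).val.map
          (fun f => fun u => colWL 𝒯 hash0 hash G l (f u)))

/-- A multiset function is `c`-bounded if its value is unchanged when all
multiplicities larger than `c` are replaced by `c`. -/
def CBoundedFun {α β : Type} (c : ℕ) (g : Multiset α → β) : Prop :=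
  ∀ m, g m = g (mcap c m)

/-- An `nAr`-ary `L`-layer `𝒯`-GNN with feature dimension `d`: templates from `𝒯`,
template-aggregation functions (invariant under root-fixing label-preserving template
automorphisms), outer multiset aggregation functions, combination functions, and a
Boolean classification function. -/
structure TGNN (𝒯 : Finset Template) (d nAr L : ℕ) where
  temp : Fin L → Fin nAr → Template
  temp_mem : ∀ l j, temp l j ∈ 𝒯
  aggT : (l : Fin L) → (j : Fin nAr) → ((Fin ((temp l j).n + 1) → (Fin d → ℝ)) → (Fin d → ℝ))
  aggT_inv : ∀ (l : Fin L) (j : Fin nAr) (σ : Equiv.Perm (Fin ((temp l j).n + 1)))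
      (lab₁ lab₂ : Fin ((temp l j).n + 1) → (Fin d → ℝ)),
      σ 0 = 0 →
      (∀ p : Fin ((temp l j).n + 1) × Fin ((temp l j).n + 1),
        p ∈ (temp l j).pos ↔ (σ p.1, σ p.2) ∈ (temp l j).pos) →
      (∀ p : Fin ((temp l j).n + 1) × Fin ((temp l j).n + 1),
        p ∈ (temp l j).neg ↔ (σ p.1, σ p.2) ∈ (temp l j).neg) →
      (∀ u, u ≠ 0 → lab₁ u = lab₂ (σ u)) →
      aggT l j lab₁ = aggT l j lab₂
  agg : Fin L → Fin nAr → Multiset (Fin d → ℝ) → (Fin d → ℝ)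
  comb : Fin L → (Fin d → ℝ) → (Fin nAr → (Fin d → ℝ)) → (Fin d → ℝ)
  cls : (Fin d → ℝ) → Bool

/-- The feature vector `λ^l(v)` of node `v` after `l` layers of the `𝒯`-GNN `N` on
input graph `G`. -/
noncomputable def TGNN.feat {𝒯 : Finset Template} {d nAr L : ℕ} (N : TGNN 𝒯 d nAr L)
    (G : LGraph (Fin d → ℝ)) : ℕ → ℕ → (Fin d → ℝ)
  | 0, v => G.lab v
  | l + 1, v =>
      if h : l < L then
        N.comb ⟨l, h⟩ (N.feat G l v)
          (fun j => N.agg ⟨l, h⟩ j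
            ((embFinset (N.temp ⟨l, h⟩ j) G v).val.map
              (fun f => N.aggT ⟨l, h⟩ j (fun u => N.feat G l (f u)))))
      else fun _ => 0

/-- A `𝒯`-GNN is `c`-bounded if all its outer aggregation functions are `c`-bounded. -/
def TGNN.IsCBounded {𝒯 : Finset Template} {d nAr L : ℕ} (N : TGNN 𝒯 d nAr L) (c : ℕ) : Prop :=
  ∀ l j, CBoundedFun c (N.agg l j)

def boolToReal (b : Bool) : ℝ := if b then 1 else 0

/-- Identify a `{0,1}^d`-labelled graph with a real-vector labelled graph. -/
def LGraph.toReal {d : ℕ} (G : LGraph (Fin d → Bool)) : LGraph (Fin d → ℝ) :=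
  ⟨G.verts, G.edge, fun v i => boolToReal (G.lab v i), G.edge_mem⟩

/-- Initialize real feature vectors of dimension `d'` from `{0,1}^a`-labels
(the first `a` coordinates hold the truth values of the propositions, the rest are `0`). -/
def initG {a : ℕ} (d' : ℕ) (G : LGraph (Fin a → Bool)) : LGraph (Fin d' → ℝ) :=
  ⟨G.verts, G.edge, fun v i => if h : (i : ℕ) < a then boolToReal (G.lab v ⟨i, h⟩) else 0,
    G.edge_mem⟩

/-- Formulae of graded template modal logic `GML(𝒯)` over propositions `AP`
(`⊤` included; a modality `⟨T⟩^{≥j}(φ₁,…,φ_{n_T})` takes `n_T = |V_T| - 1` arguments). -/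
inductive GML (AP : Type) : Type
  | top : GML AP
  | prop : AP → GML AP
  | neg : GML AP → GML AP
  | and : GML AP → GML AP → GML AP
  | dia : (T : Template) → ℕ → (Fin T.n → GML AP) → GML AP

/-- Semantics of `GML(𝒯)` on pointed labelled graphs:
`(G,v) ⊨ ⟨T⟩^{≥j}(φ⃗)` iff at least `j` embeddings `f ∈ emb(T,(G,v))` satisfy
`(G, f(i)) ⊨ φᵢ` for all `1 ≤ i ≤ n_T`. -/
def Sat {AP : Type} (G : LGraph (AP → Bool)) : GML AP → ℕ → Prop
  | .top, _ => True
  | .prop p, v => G.lab v p = true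
  | .neg φ, v => ¬ Sat G φ v
  | .and φ ψ, v => Sat G φ v ∧ Sat G ψ v
  | .dia T j φs, v =>
      j ≤ ((embFinset T G v).filter
        (fun f => ∀ i : Fin T.n, Sat G (φs i) (f i.succ))).card

/-- Modal depth. -/
def GML.md {AP : Type} : GML AP → ℕ
  | .top => 0
  | .prop _ => 0
  | .neg φ => φ.md
  | .and φ ψ => max φ.md ψ.md
  | .dia _ _ φs => 1 + Finset.univ.sup fun i => (φs i).md

/-- Counting bound: the least `c` such that every modality `⟨T⟩^{≥j}` occurring in the
formula has `j ≤ c`. -/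
def GML.cb {AP : Type} : GML AP → ℕ
  | .top => 0
  | .prop _ => 0
  | .neg φ => φ.cb
  | .and φ ψ => max φ.cb ψ.cb
  | .dia _ j φs => max j (Finset.univ.sup fun i => (φs i).cb)

/-- Syntactic depth: counts both Boolean connectives and modalities along the deepest
branch of the syntax tree. -/
def GML.sd {AP : Type} : GML AP → ℕ
  | .top => 0
  | .prop _ => 0
  | .neg φ => 1 + φ.sd
  | .and φ ψ => 1 + max φ.sd ψ.sd
  | .dia _ _ φs => 1 + Finset.univ.sup fun i => (φs i).sd

/-- Well-formedness of a `GML(𝒯)` formula: all templates come from `𝒯` and all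
grades satisfy `j ≥ 1`. -/
def GML.Wf {AP : Type} (𝒯 : Finset Template) : GML AP → Prop
  | .top => True
  | .prop _ => True
  | .neg φ => φ.Wf 𝒯
  | .and φ ψ => φ.Wf 𝒯 ∧ ψ.Wf 𝒯
  | .dia T j φs => T ∈ 𝒯 ∧ 1 ≤ j ∧ ∀ i, (φs i).Wf 𝒯

/-- Finite conjunction (`⊤` for the empty list). -/
def bigConj {AP : Type} : List (GML AP) → GML AP
  | [] => .top
  | φ :: rest => .and φ (bigConj rest)

/-- `|S^{(G,v)}_{T,φ⃗}|`: the number of embeddings `f ∈ emb(T,(G,v))` with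
`(G, f(i)) ⊨ φᵢ` for all `1 ≤ i ≤ n_T`. -/
noncomputable def Scard {AP : Type} (G : LGraph (AP → Bool)) (T : Template) (v : ℕ)
    (φs : Fin T.n → GML AP) : ℕ :=
  ((embFinset T G v).filter (fun f => ∀ i : Fin T.n, Sat G (φs i) (f i.succ))).card

/-- The `l`-characteristic formula `χ^l_{(G,v)}`. -/
noncomputable def charU {AP : Type} [Fintype AP] (𝒯 : Finset Template) :
    ℕ → LGraph (AP → Bool) → ℕ → GML AP
  | 0 => fun G v =>
      bigConj ((Finset.univ : Finset AP).toList.map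
        (fun p => if G.lab v p then GML.prop p else GML.neg (GML.prop p)))
  | l + 1 => fun G v =>
      GML.and (charU 𝒯 l G v)
        (bigConj (𝒯.toList.map (fun T =>
          GML.and
            (bigConj ((embFinset T G v).toList.map (fun f =>
              GML.dia T (Scard G T v (fun i => charU 𝒯 l G (f i.succ)))
                (fun i => charU 𝒯 l G (f i.succ)))))
            (GML.neg (GML.dia T (Scard G T v (fun _ => GML.top) + 1)
              (fun _ => GML.top))))))

/-- `reps m` is a system of representatives for the `m`-`c`-`𝒯`-bisimilarity classes of
finite pointed labelled graphs: every representative is a genuine pointed graph, every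
pointed graph is `m`-`c`-`𝒯`-bisimilar to some representative, and distinct
representatives are non-bisimilar. -/
def RepSystem {AP : Type} (𝒯 : Finset Template) (c : ℕ)
    (reps : ℕ → Finset (LGraph (AP → Bool) × ℕ)) : Prop :=
  ∀ m : ℕ,
    (∀ q ∈ reps m, q.2 ∈ q.1.verts) ∧
    (∀ (G : LGraph (AP → Bool)) (v : ℕ), v ∈ G.verts →
      ∃ q ∈ reps m, BBisimilar 𝒯 m c q.1 q.2 G v) ∧
    (∀ q ∈ reps m, ∀ q' ∈ reps m, BBisimilar 𝒯 m c q.1 q.2 q'.1 q'.2 → q = q')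

/-- The bounded `l`-`c`-characteristic formula `χ^{l,c}_{(G,v)}`, relative to a chosen
system `reps` of representatives of the bounded bisimilarity classes. -/
noncomputable def charB {AP : Type} [Fintype AP] (𝒯 : Finset Template) (c : ℕ)
    (reps : ℕ → Finset (LGraph (AP → Bool) × ℕ)) :
    ℕ → LGraph (AP → Bool) → ℕ → GML AP
  | 0 => fun G v =>
      bigConj ((Finset.univ : Finset AP).toList.map
        (fun p => if G.lab v p then GML.prop p else GML.neg (GML.prop p)))
  | l + 1 => fun G v =>
      GML.and (charB 𝒯 c reps l G v)
        (bigConj (𝒯.toList.map (fun T =>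
          GML.and
            (bigConj ((embFinset T G v).toList.map (fun f =>
              GML.dia T (min c (Scard G T v (fun i => charB 𝒯 c reps l G (f i.succ))))
                (fun i => charB 𝒯 c reps l G (f i.succ)))))
            (bigConj (((Fintype.piFinset (fun _ : Fin T.n => reps l)).filter
                (fun t => Scard G T v
                  (fun i => charB 𝒯 c reps l (t i).1 (t i).2) + 1 ≤ c)).toList.map
              (fun t => GML.neg (GML.dia T
                  (Scard G T v (fun i => charB 𝒯 c reps l (t i).1 (t i).2) + 1)
                  (fun i => charB 𝒯 c reps l (t i).1 (t i).2))))))))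

/-- Standard graded forth condition on out-neighbours. -/
def StdForth {Λ : Type} (Z : ℕ → ℕ → Prop) (G G' : LGraph Λ) (v v' : ℕ) (k : ℕ) : Prop :=
  ∀ us : Fin k → ℕ, Function.Injective us → (∀ i, G.edge v (us i)) →
    ∃ us' : Fin k → ℕ, Function.Injective us' ∧ (∀ i, G'.edge v' (us' i)) ∧
      ∀ i, Z (us i) (us' i)

/-- `Z` is a standard graded `l`-bisimulation (the relation underlying standard 1-WL
colour refinement). -/
def IsStdBisim {Λ : Type} (G G' : LGraph Λ) : ℕ → (ℕ → ℕ → Prop) → Prop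
  | 0, Z => ∀ v v', Z v v' → G.lab v = G'.lab v'
  | l + 1, Z => ∃ Z', IsStdBisim G G' l Z' ∧
      ∀ v v', Z v v' → Z' v v' ∧ ∀ k, 1 ≤ k →
        StdForth Z' G G' v v' k ∧ StdForth (fun a b => Z' b a) G' G v' v k

/-- `(G,v)` and `(G',v')` are standard graded `l`-bisimilar. -/
def StdBisimilar {Λ : Type} (l : ℕ) (G : LGraph Λ) (v : ℕ) (G' : LGraph Λ) (v' : ℕ) : Prop :=
  ∃ Z, IsStdBisim G G' l Z ∧ Z v v'

/-- The edge template `T₁ = ({r,a}, E⁺ = {(r,a)}, E⁻ = ∅, r)`. -/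
def T1 : Template := ⟨1, {(0, 1)}, ∅, by decide⟩

/-- The triangle template `T△ = ({r,a,b}, E⁺ = {(r,a),(a,b),(b,r)}, E⁻ = ∅, r)`. -/
def Ttri : Template := ⟨2, {(0, 1), (1, 2), (2, 0)}, ∅, by decide⟩

/-- The directed 3-cycle, all nodes with the same constant label. -/
def G3 : LGraph Unit where
  verts := {0, 1, 2}
  edge u w := (u = 0 ∧ w = 1) ∨ (u = 1 ∧ w = 2) ∨ (u = 2 ∧ w = 0)
  lab _ := ()
  edge_mem := by rintro u w (⟨rfl, rfl⟩ | ⟨rfl, rfl⟩ | ⟨rfl, rfl⟩) <;> simp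

/-- The directed 6-cycle, all nodes with the same constant label. -/
def G6 : LGraph Unit where
  verts := Finset.range 6
  edge u w := u < 6 ∧ w = (u + 1) % 6
  lab _ := ()
  edge_mem := by
    rintro u w ⟨hu, rfl⟩
    simp only [Finset.mem_range]
    omega

lemma pick_of_card_le {α : Type} {k : ℕ} {s : Finset α} (h : k ≤ s.card) :
    ∃ F : Fin k → α, Function.Injective F ∧ ∀ i, F i ∈ s := by
  refine ⟨fun i => s.toList.get (Fin.castLE (by simpa using h) i), ?_, ?_⟩
  · intro i j hij
    have h2 := (List.Nodup.get_inj_iff s.nodup_toList).1 hij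
    exact Fin.castLE_injective _ h2
  · intro i; exact Finset.mem_toList.1 (s.toList.get_mem _)

lemma get_congr {α : Type} {L1 L2 : List α} (h : L1 = L2) {n : ℕ} (hn : n < L1.length) :
    L1.get ⟨n, hn⟩ = L2.get ⟨n, h ▸ hn⟩ := by subst h; rfl

lemma nodup_get_nat {α : Type} (L : List α) (hL : L.Nodup) (n m : ℕ)
    (hn : n < L.length) (hm : m < L.length)
    (h : L.get ⟨n, hn⟩ = L.get ⟨m, hm⟩) : n = m :=
  congrArg Fin.val ((List.Nodup.get_inj_iff hL).1 h)

lemma match_lemma {α γ : Type} {c k : ℕ} (hk : k ≤ c) (s s' : Finset α) (g g' : α → γ)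
    (h : ∀ t, min c ((s.filter (fun a => g a = t)).card)
           = min c ((s'.filter (fun a => g' a = t)).card))
    (F : Fin k → α) (hF : Function.Injective F) (hFs : ∀ i, F i ∈ s) :
    ∃ F' : Fin k → α, Function.Injective F' ∧ (∀ i, F' i ∈ s') ∧
      ∀ i, g' (F' i) = g (F i) := by
  classical
  -- rank of i among indices with the same g-value
  set rank : Fin k → ℕ := fun i =>
    (Finset.univ.filter (fun j => g (F j) = g (F i) ∧ j < i)).card with hrankdef
  have hrank_lt : ∀ i, rank i < (Finset.univ.filter (fun j => g (F j) = g (F i))).card := by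
    intro i
    apply Finset.card_lt_card
    constructor
    · intro j hj
      simp only [Finset.mem_filter] at hj ⊢
      exact ⟨hj.1, hj.2.1⟩
    · intro hsub
      have : i ∈ Finset.univ.filter (fun j => g (F j) = g (F i)) := by simp
      have := hsub this
      simp at this
  have hcnt : ∀ i, (Finset.univ.filter (fun j => g (F j) = g (F i))).card
      ≤ (s'.filter (fun a => g' a = g (F i))).card := by
    intro i
    have h1 : (Finset.univ.filter (fun j => g (F j) = g (F i))).card
        ≤ (s.filter (fun a => g a = g (F i))).card := by
      apply Finset.card_le_card_of_injOn F
      · intro j hj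
        simp only [Finset.mem_coe, Finset.mem_filter] at hj ⊢
        exact ⟨hFs j, hj.2⟩
      · exact fun a _ b _ hab => hF hab
    have h2 : (Finset.univ.filter (fun j => g (F j) = g (F i))).card ≤ c := by
      calc _ ≤ (Finset.univ : Finset (Fin k)).card := Finset.card_filter_le _ _
        _ = k := by simp
        _ ≤ c := hk
    have h3 : (Finset.univ.filter (fun j => g (F j) = g (F i))).card
        ≤ min c ((s.filter (fun a => g a = g (F i))).card) := le_min h2 h1
    calc _ ≤ min c ((s'.filter (fun a => g' a = g (F i))).card) := (h (g (F i))) ▸ h3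
      _ ≤ _ := min_le_right _ _
  have hlen : ∀ i, rank i < (s'.filter (fun a => g' a = g (F i))).toList.length := by
    intro i
    rw [Finset.length_toList]
    exact lt_of_lt_of_le (hrank_lt i) (hcnt i)
  refine ⟨fun i => (s'.filter (fun a => g' a = g (F i))).toList.get ⟨rank i, hlen i⟩,
    ?_, ?_, ?_⟩
  · -- injectivity
    intro i j hij
    dsimp only at hij
    have hmemi : (s'.filter (fun a => g' a = g (F i))).toList.get ⟨rank i, hlen i⟩
        ∈ s'.filter (fun a => g' a = g (F i)) :=
      Finset.mem_toList.1 (List.get_mem _ _)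
    have hmemj : (s'.filter (fun a => g' a = g (F j))).toList.get ⟨rank j, hlen j⟩
        ∈ s'.filter (fun a => g' a = g (F j)) :=
      Finset.mem_toList.1 (List.get_mem _ _)
    have hgi := (Finset.mem_filter.1 hmemi).2
    have hgj := (Finset.mem_filter.1 hmemj).2
    have ht : g (F i) = g (F j) := by rw [← hgi, ← hgj, hij]
    -- rewrite j's data to i's value
    by_contra hne
    -- wlog via trichotomy: show rank i ≠ rank j leads to contradiction with get equality
    have hL : (s'.filter (fun a => g' a = g (F j))).toList
        = (s'.filter (fun a => g' a = g (F i))).toList := by rw [ht]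
    have hranks : rank i = rank j := by
      apply nodup_get_nat _ (Finset.nodup_toList _) _ _ (hlen i) (hL ▸ hlen j)
      rw [hij]
      exact get_congr hL (hlen j)
    -- rank is injective on {j | g (F j) = g (F i)}
    have key : ∀ a b : Fin k, g (F a) = g (F b) → a < b → rank a < rank b := by
      intro a b hab hlt
      apply Finset.card_lt_card
      constructor
      · intro x hx
        simp only [Finset.mem_filter] at hx ⊢
        exact ⟨hx.1, hab ▸ hx.2.1, lt_trans hx.2.2 hlt⟩
      · intro hsub
        have ha : a ∈ Finset.univ.filter (fun x => g (F x) = g (F b) ∧ x < b) := by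
          simp [hab.symm, hlt]
        have := hsub ha
        simp at this
    rcases lt_trichotomy i j with hlt | heq | hlt
    · exact absurd hranks (Nat.ne_of_lt (key i j ht hlt))
    · exact hne heq
    · exact absurd hranks.symm (Nat.ne_of_lt (key j i ht.symm hlt))
  · intro i
    have := Finset.mem_toList.1 (List.get_mem
      (s'.filter (fun a => g' a = g (F i))).toList ⟨rank i, hlen i⟩)
    exact (Finset.mem_filter.1 this).1
  · intro i
    have := Finset.mem_toList.1 (List.get_mem
      (s'.filter (fun a => g' a = g (F i))).toList ⟨rank i, hlen i⟩)
    exact (Finset.mem_filter.1 this).2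


lemma mem_embFinset {Λ : Type} {T : Template} {G : LGraph Λ} {w : ℕ}
    {f : Fin (T.n + 1) → ℕ} : f ∈ embFinset T G w ↔ IsEmb T G w f := by
  constructor
  · exact fun h => (Finset.mem_filter.1 h).2
  · intro h
    exact Finset.mem_filter.2 ⟨Fintype.mem_piFinset.2 h.2.2.1, h⟩

/-- The finite colour type for the capped colour refinement. -/
def ColorT (𝒯 : Finset Template) (d c : ℕ) : ℕ → Type
  | 0 => Fin d → Bool
  | l + 1 => ColorT 𝒯 d c l ×
      ((T : {x // x ∈ 𝒯}) → (Fin (T.1.n + 1) → ColorT 𝒯 d c l) → Fin (c + 1))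

instance ColorT.finite (𝒯 : Finset Template) (d c : ℕ) :
    ∀ l, Finite (ColorT 𝒯 d c l)
  | 0 => inferInstanceAs (Finite (Fin d → Bool))
  | l + 1 => by
      have := ColorT.finite 𝒯 d c l
      exact inferInstanceAs (Finite (ColorT 𝒯 d c l ×
        ((T : {x // x ∈ 𝒯}) → (Fin (T.1.n + 1) → ColorT 𝒯 d c l) → Fin (c + 1))))

/-- The capped colour of a node. -/
noncomputable def colr (𝒯 : Finset Template) (d c : ℕ) :
    (l : ℕ) → LGraph (Fin d → Bool) → ℕ → ColorT 𝒯 d c l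
  | 0, G, v => G.lab v
  | l + 1, G, v =>
      (colr 𝒯 d c l G v,
        fun T t => ⟨min c ((embFinset T.1 G v).filter
            (fun f => (fun u => colr 𝒯 d c l G (f u)) = t)).card,
          Nat.lt_succ_of_le (min_le_left _ _)⟩)

lemma colr_sound (𝒯 : Finset Template) (d c : ℕ) :
    ∀ (l : ℕ) (G G' : LGraph (Fin d → Bool)) (Z : ℕ → ℕ → Prop),
      IsBisimP 𝒯 (fun k => 1 ≤ k ∧ k ≤ c) G G' l Z →
      ∀ v v', Z v v' → colr 𝒯 d c l G v = colr 𝒯 d c l G' v'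
  | 0, G, G', Z, hbis, v, v', hZ => hbis v v' hZ
  | l + 1, G, G', Z, hbis, v, v', hZ => by
    obtain ⟨Z', hZ', hcond⟩ := hbis
    have IH : ∀ a b, Z' a b → colr 𝒯 d c l G a = colr 𝒯 d c l G' b :=
      fun a b => colr_sound 𝒯 d c l G G' Z' hZ' a b
    have hfirst := (hcond v v' hZ).1
    refine Prod.ext (IH v v' hfirst) ?_
    funext T t
    apply Fin.ext
    dsimp only [colr]
    -- two inequalities
    have key : ∀ (H H' : LGraph (Fin d → Bool)) (w w' : ℕ) (W : ℕ → ℕ → Prop),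
        (∀ a b, W a b → colr 𝒯 d c l H a = colr 𝒯 d c l H' b) →
        (∀ k, 1 ≤ k ∧ k ≤ c → Forth W T.1 H H' w w' k) →
        ∀ t : Fin (T.1.n + 1) → ColorT 𝒯 d c l,
        min c ((embFinset T.1 H w).filter
            (fun f => (fun u => colr 𝒯 d c l H (f u)) = t)).card
          ≤ min c ((embFinset T.1 H' w').filter
            (fun f => (fun u => colr 𝒯 d c l H' (f u)) = t)).card := by
      intro H H' w w' W hW hforth t
      set k := min c ((embFinset T.1 H w).filter
          (fun f => (fun u => colr 𝒯 d c l H (f u)) = t)).card with hkdef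
      rcases Nat.eq_zero_or_pos k with hk0 | hk1
      · exact hk0 ▸ Nat.zero_le _
      have hkc : k ≤ c := min_le_left _ _
      obtain ⟨F, hFinj, hFmem⟩ := pick_of_card_le (s := (embFinset T.1 H w).filter
          (fun f => (fun u => colr 𝒯 d c l H (f u)) = t)) (min_le_right _ _)
      have hFemb : ∀ i : Fin k, IsEmb T.1 H w (F i) :=
        fun i => mem_embFinset.1 (Finset.mem_filter.1 (hFmem i)).1
      obtain ⟨F', hF'inj, hF'emb, hF'rel⟩ := hforth k ⟨hk1, hkc⟩ F hFinj hFemb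
      have hF'mem : ∀ i : Fin k, F' i ∈ (embFinset T.1 H' w').filter
          (fun f => (fun u => colr 𝒯 d c l H' (f u)) = t) := by
        intro i
        refine Finset.mem_filter.2 ⟨mem_embFinset.2 (hF'emb i), ?_⟩
        funext u
        have h1 := hW _ _ (hF'rel i u)
        have h2 := congrFun (Finset.mem_filter.1 (hFmem i)).2 u
        exact h1.symm.trans h2
      have hcard : k ≤ ((embFinset T.1 H' w').filter
          (fun f => (fun u => colr 𝒯 d c l H' (f u)) = t)).card := by
        calc k = (Finset.univ : Finset (Fin k)).card := by simp
          _ ≤ _ := Finset.card_le_card_of_injOn F'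
            (fun i _ => hF'mem i) (fun a _ b _ hab => hF'inj hab)
      exact le_min hkc hcard
    have h2 := (hcond v v' hZ).2 T.1 T.2
    apply le_antisymm
    · exact key G G' v v' Z' IH (fun k hk => (h2 k hk).1) t
    · exact key G' G v' v (fun a b => Z' b a) (fun a b hab => (IH b a hab).symm)
        (fun k hk => (h2 k hk).2) t

lemma colr_complete (𝒯 : Finset Template) (d c : ℕ) (G G' : LGraph (Fin d → Bool)) :
    ∀ l : ℕ, IsBisimP 𝒯 (fun k => 1 ≤ k ∧ k ≤ c) G G' l
      (fun a b => colr 𝒯 d c l G a = colr 𝒯 d c l G' b)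
  | 0 => fun v v' h => h
  | l + 1 => by
    refine ⟨fun a b => colr 𝒯 d c l G a = colr 𝒯 d c l G' b,
      colr_complete 𝒯 d c G G' l, ?_⟩
    intro v v' hvv'
    have hfst : colr 𝒯 d c l G v = colr 𝒯 d c l G' v' := congrArg Prod.fst hvv'
    refine ⟨hfst, ?_⟩
    intro T hT k hk
    have hmins : ∀ t : Fin (T.n + 1) → ColorT 𝒯 d c l,
        min c ((embFinset T G v).filter
            (fun f => (fun u => colr 𝒯 d c l G (f u)) = t)).card
          = min c ((embFinset T G' v').filter
            (fun f => (fun u => colr 𝒯 d c l G' (f u)) = t)).card := by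
      intro t
      have hsnd := congrArg Prod.snd hvv'
      have := congrFun (congrFun hsnd ⟨T, hT⟩) t
      exact congrArg Fin.val this
    have hmins' : ∀ t : Fin (T.n + 1) → ColorT 𝒯 d c l,
        min c ((@Finset.filter _ (fun f => (fun u => colr 𝒯 d c l G (f u)) = t)
          (fun f => Classical.propDecidable _) (embFinset T G v)).card)
        = min c ((@Finset.filter _ (fun f => (fun u => colr 𝒯 d c l G' (f u)) = t)
          (fun f => Classical.propDecidable _) (embFinset T G' v')).card) := by
      intro t
      have e1 : (@Finset.filter _ (fun f => (fun u => colr 𝒯 d c l G (f u)) = t)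
          (fun f => Classical.propDecidable _) (embFinset T G v))
          = (embFinset T G v).filter (fun f => (fun u => colr 𝒯 d c l G (f u)) = t) := by
        apply Finset.filter_congr_decidable
      have e2 : (@Finset.filter _ (fun f => (fun u => colr 𝒯 d c l G' (f u)) = t)
          (fun f => Classical.propDecidable _) (embFinset T G' v'))
          = (embFinset T G' v').filter (fun f => (fun u => colr 𝒯 d c l G' (f u)) = t) := by
        apply Finset.filter_congr_decidable
      rw [e1, e2]
      exact hmins t
    constructor
    · intro F hFinj hFemb
      obtain ⟨F', hF'inj, hF'mem, hF'val⟩ := match_lemma hk.2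
        (embFinset T G v) (embFinset T G' v')
        (fun f => (fun u => colr 𝒯 d c l G (f u)))
        (fun f => (fun u => colr 𝒯 d c l G' (f u)))
        hmins' F hFinj (fun i => mem_embFinset.2 (hFemb i))
      exact ⟨F', hF'inj, fun i => mem_embFinset.1 (hF'mem i),
        fun i u => (congrFun (hF'val i) u).symm⟩
    · intro F hFinj hFemb
      obtain ⟨F', hF'inj, hF'mem, hF'val⟩ := match_lemma hk.2
        (embFinset T G' v') (embFinset T G v)
        (fun f => (fun u => colr 𝒯 d c l G' (f u)))
        (fun f => (fun u => colr 𝒯 d c l G (f u)))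
        (fun t => (hmins' t).symm) F hFinj (fun i => mem_embFinset.2 (hFemb i))
      exact ⟨F', hF'inj, fun i => mem_embFinset.1 (hF'mem i),
        fun i u => congrFun (hF'val i) u⟩

/-- For every `l`, every `c ≥ 1`, every finite set of templates `𝒯`, and
every fixed finite label alphabet `{0,1}^d`, the relation of `l`-`c`-`𝒯`-bisimilarity on
pointed labelled graphs has finite index: the collection of its equivalence classes is
finite. -/
theorem bounded_bisim_finite_index (d l c : ℕ) (hc : 1 ≤ c) (𝒯 : Finset Template) :
    Set.Finite {Cl : Set (LGraph (Fin d → Bool) × ℕ) |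
      ∃ p : LGraph (Fin d → Bool) × ℕ, p.2 ∈ p.1.verts ∧
        Cl = {q | q.2 ∈ q.1.verts ∧ BBisimilar 𝒯 l c p.1 p.2 q.1 q.2}} := by
  classical
  apply Set.Finite.subset (Set.finite_range (fun x : ColorT 𝒯 d c l =>
    {q : LGraph (Fin d → Bool) × ℕ | q.2 ∈ q.1.verts ∧ colr 𝒯 d c l q.1 q.2 = x}))
  rintro Cl ⟨p, hp, rfl⟩
  refine ⟨colr 𝒯 d c l p.1 p.2, ?_⟩
  ext q
  simp only [Set.mem_setOf_eq]
  constructor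
  · rintro ⟨hq, hcol⟩
    exact ⟨hq, ⟨fun a b => colr 𝒯 d c l p.1 a = colr 𝒯 d c l q.1 b,
      colr_complete 𝒯 d c p.1 q.1 l, hcol.symm⟩⟩
  · rintro ⟨hq, Z, hbis, hZ⟩
    exact ⟨hq, (colr_sound 𝒯 d c l p.1 q.1 Z hbis p.2 q.2 hZ).symm⟩
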